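/- Assume d ≥ 3. Then the cosine of the angle between the population gradient-direction estimate and the true gradient tends to 1 at the boundary point: lim_{δ → 0⁺} ⟪g(δ), ∇S(x_t)⟫ / (‖g(δ)‖ · ‖∇S(x_t)‖) = 1 (in particular g(δ) ≠ 0 for all sufficiently small δ > 0). -/

import Mathlib

open MeasureTheory Metric Filter
open scoped RealInnerProductSpace ENNReal NNReal

namespace SphereAux

variable {n : ℕ}

/-- pi-type image of a set in Euclidean space (same underlying set). -/
def toPi (A : Set (EuclideanSpace ℝ (Fin n))) : Set (Fin n → ℝ) :=
  (WithLp.equiv 2 (Fin n → ℝ)) '' A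

lemma vol_toPi_le_mu (A : Set (EuclideanSpace ℝ (Fin n))) :
    volume (toPi A) ≤ μH[(n : ℝ)] A := by
  have h := (PiLp.lipschitzWith_ofLp 2 (fun _ : Fin n => ℝ)).hausdorffMeasure_image_le
    (d := (n : ℝ)) (by positivity) A
  have hpi : (μH[(n : ℝ)] : Measure (Fin n → ℝ)) = volume := by
    have := hausdorffMeasure_pi_real (ι := Fin n)
    simpa using this
  rw [hpi] at h
  simpa [toPi] using h

lemma mu_le_vol_toPi (A : Set (EuclideanSpace ℝ (Fin n))) :
    μH[(n : ℝ)] A ≤ ((n : ℝ≥0∞) ^ ((1:ℝ)/2)) ^ (n : ℝ) * volume (toPi A) := by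
  have h := (PiLp.antilipschitzWith_ofLp 2 (fun _ : Fin n => ℝ)).le_hausdorffMeasure_image
    (d := (n : ℝ)) (by positivity) A
  have hpi : (μH[(n : ℝ)] : Measure (Fin n → ℝ)) = volume := by
    have := hausdorffMeasure_pi_real (ι := Fin n)
    simpa using this
  rw [hpi] at h
  have hc : ((↑(Fintype.card (Fin n)) ^ (1 / (2:ℝ≥0∞)).toReal : ℝ≥0) : ℝ≥0∞)
      = (n : ℝ≥0∞) ^ ((1:ℝ)/2) := by
    have h2 : (1 / (2:ℝ≥0∞)).toReal = (1:ℝ)/2 := by simp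
    rw [h2, ENNReal.coe_rpow_of_nonneg _ (by norm_num : (0:ℝ) ≤ 1/2)]
    simp
  rw [hc] at h
  simpa [toPi] using h

lemma const_ne_top : ((n : ℝ≥0∞) ^ ((1:ℝ)/2)) ^ (n : ℝ) ≠ ∞ := by
  apply ENNReal.rpow_ne_top_of_nonneg (by positivity)
  exact ENNReal.rpow_ne_top_of_nonneg (by norm_num) (by simp)

lemma mu_null_of_vol_null {A : Set (EuclideanSpace ℝ (Fin n))}
    (h : volume (toPi A) = 0) : μH[(n : ℝ)] A = 0 := by
  have := mu_le_vol_toPi A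
  rw [h, mul_zero] at this
  exact le_antisymm this zero_le

lemma mu_lt_top_of_bounded {A : Set (EuclideanSpace ℝ (Fin n))} {R : ℝ}
    (hA : A ⊆ closedBall 0 R) : μH[(n : ℝ)] A < ∞ := by
  refine lt_of_le_of_lt (mu_le_vol_toPi A) ?_
  refine ENNReal.mul_lt_top const_ne_top.lt_top ?_
  have himg : toPi A ⊆ closedBall 0 R := by
    rintro x ⟨y, hy, rfl⟩
    have hdist := (PiLp.lipschitzWith_ofLp 2 (fun _ : Fin n => ℝ)).dist_le_mul y 0
    simp only [one_mul, NNReal.coe_one] at hdist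
    have hy' : dist y 0 ≤ R := by simpa [dist_eq_norm] using hA hy
    have : dist ((WithLp.equiv 2 (Fin n → ℝ)) y) 0 ≤ R := by
      calc dist ((WithLp.equiv 2 (Fin n → ℝ)) y) 0
          = dist ((WithLp.equiv 2 (Fin n → ℝ)) y) ((WithLp.equiv 2 (Fin n → ℝ)) 0) := by
            norm_num
        _ ≤ dist y 0 := hdist
        _ ≤ R := hy'
    simpa [mem_closedBall] using this
  refine lt_of_le_of_lt (measure_mono himg) ?_
  exact (isCompact_closedBall 0 R).measure_lt_top

/-- `|x i| ≤ ‖x‖` in Euclidean space. -/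
lemma abs_coord_le_norm (x : EuclideanSpace ℝ (Fin n)) (i : Fin n) : |x i| ≤ ‖x‖ := by
  rw [EuclideanSpace.norm_eq]
  have h1 : |x i| = Real.sqrt (‖x i‖ ^ 2) := by
    rw [Real.sqrt_sq_eq_abs]; simp
  rw [h1]
  apply Real.sqrt_le_sqrt
  exact Finset.single_le_sum (f := fun j => ‖x j‖^2) (fun j _ => by positivity) (Finset.mem_univ i)

/-- Insert a fixed coordinate, `ℝⁿ → ℝⁿ⁺¹`, as a map of Euclidean spaces. -/
noncomputable def euclInsert (i : Fin (n + 1)) (c : ℝ) (y : EuclideanSpace ℝ (Fin n)) :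
    EuclideanSpace ℝ (Fin (n + 1)) :=
  (WithLp.equiv 2 (Fin (n+1) → ℝ)).symm (Fin.insertNth i c ((WithLp.equiv 2 (Fin n → ℝ)) y))

@[simp] lemma euclInsert_apply_same (i : Fin (n + 1)) (c : ℝ) (y : EuclideanSpace ℝ (Fin n)) :
    euclInsert i c y i = c := by
  simp [euclInsert]

@[simp] lemma euclInsert_apply_succAbove (i : Fin (n + 1)) (c : ℝ) (y : EuclideanSpace ℝ (Fin n))
    (k : Fin n) : euclInsert i c y (i.succAbove k) = y k := by
  simp [euclInsert]

/-- Remove a coordinate, `ℝⁿ⁺¹ → ℝⁿ`, as a map of Euclidean spaces. -/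
noncomputable def euclRemove (i : Fin (n + 1)) (x : EuclideanSpace ℝ (Fin (n + 1))) :
    EuclideanSpace ℝ (Fin n) :=
  (WithLp.equiv 2 (Fin n → ℝ)).symm (fun k => x (i.succAbove k))

@[simp] lemma euclRemove_apply (i : Fin (n + 1)) (x : EuclideanSpace ℝ (Fin (n + 1))) (k : Fin n) :
    euclRemove i x k = x (i.succAbove k) := rfl

lemma euclInsert_euclRemove (i : Fin (n + 1)) (x : EuclideanSpace ℝ (Fin (n + 1))) :
    euclInsert i (x i) (euclRemove i x) = x := by
  ext j
  rcases eq_or_ne j i with rfl | hne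
  · simp
  · obtain ⟨k, rfl⟩ := Fin.exists_succAbove_eq hne
    simp

/-- Inserting a fixed coordinate is an isometry `ℝⁿ → ℝⁿ⁺¹`. -/
lemma isometry_insertNth (i : Fin (n + 1)) (c : ℝ) :
    Isometry (euclInsert i c) := by
  apply Isometry.of_dist_eq
  intro y z
  rw [EuclideanSpace.dist_eq, EuclideanSpace.dist_eq]
  congr 1
  rw [Fin.sum_univ_succAbove (fun j => dist (euclInsert i c y j) (euclInsert i c z j) ^ 2) i]
  simp

/-- Removing a coordinate is `1`-Lipschitz. -/
lemma lipschitz_euclRemove (i : Fin (n + 1)) : LipschitzWith 1 (euclRemove i) := by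
  apply LipschitzWith.of_dist_le_mul
  intro x y
  rw [EuclideanSpace.dist_eq, EuclideanSpace.dist_eq, NNReal.coe_one, one_mul]
  apply Real.sqrt_le_sqrt
  rw [Fin.sum_univ_succAbove (fun j => dist (x j) (y j) ^ 2) i]
  have h : ∀ k : Fin n, dist (euclRemove i x k) (euclRemove i y k) ^ 2
      = dist (x (i.succAbove k)) (y (i.succAbove k)) ^ 2 := fun k => rfl
  simp only [h]
  have : (0:ℝ) ≤ dist (x i) (y i) ^ 2 := by positivity
  linarith


section
variable {F : Type*} [NormedAddCommGroup F] [NormedSpace ℝ F]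

lemma norm_normalize_sub_le (x y : F) (hx : 1 ≤ ‖x‖) (hy : 1 ≤ ‖y‖) :
    ‖‖x‖⁻¹ • x - ‖y‖⁻¹ • y‖ ≤ 2 * ‖x - y‖ := by
  have hx0 : (0:ℝ) < ‖x‖ := lt_of_lt_of_le one_pos hx
  have hy0 : (0:ℝ) < ‖y‖ := lt_of_lt_of_le one_pos hy
  have key : ‖x‖⁻¹ • x - ‖y‖⁻¹ • y = ‖x‖⁻¹ • (x - y) + (‖x‖⁻¹ - ‖y‖⁻¹) • y := by
    rw [smul_sub, sub_smul]; abel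
  rw [key]
  have h1 : ‖‖x‖⁻¹ • (x - y)‖ ≤ ‖x - y‖ := by
    rw [norm_smul, norm_inv, norm_norm]
    calc ‖x‖⁻¹ * ‖x - y‖ ≤ 1 * ‖x - y‖ := by
          apply mul_le_mul_of_nonneg_right _ (norm_nonneg _)
          exact inv_le_one_of_one_le₀ hx
      _ = ‖x - y‖ := one_mul _
  have hd : |‖y‖ - ‖x‖| ≤ ‖x - y‖ := by
    have := abs_norm_sub_norm_le y x
    rwa [norm_sub_rev] at this
  have h2 : ‖(‖x‖⁻¹ - ‖y‖⁻¹) • y‖ ≤ ‖x - y‖ := by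
    rw [norm_smul, Real.norm_eq_abs]
    have heq : ‖x‖⁻¹ - ‖y‖⁻¹ = (‖y‖ - ‖x‖) / (‖x‖ * ‖y‖) := by field_simp
    rw [heq, abs_div, abs_of_pos (by positivity : (0:ℝ) < ‖x‖ * ‖y‖)]
    calc |‖y‖ - ‖x‖| / (‖x‖ * ‖y‖) * ‖y‖ = |‖y‖ - ‖x‖| / ‖x‖ := by field_simp
      _ ≤ |‖y‖ - ‖x‖| := div_le_self (abs_nonneg _) hx
      _ ≤ ‖x - y‖ := hd
  calc ‖‖x‖⁻¹ • (x - y) + (‖x‖⁻¹ - ‖y‖⁻¹) • y‖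
      ≤ ‖‖x‖⁻¹ • (x - y)‖ + ‖(‖x‖⁻¹ - ‖y‖⁻¹) • y‖ := norm_add_le _ _
    _ ≤ ‖x - y‖ + ‖x - y‖ := add_le_add h1 h2
    _ = 2 * ‖x - y‖ := by ring

lemma lipschitzOn_normalize :
    LipschitzOnWith 2 (fun x : F => ‖x‖⁻¹ • x) {x : F | 1 ≤ ‖x‖} := by
  apply LipschitzOnWith.of_dist_le_mul
  intro x hx y hy
  rw [dist_eq_norm, dist_eq_norm]
  simpa using norm_normalize_sub_le x y hx hy

end

end SphereAux

namespace SphereAux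

lemma mu_sphere_lt_top (n : ℕ) :
    μH[(n : ℝ)] (sphere (0 : EuclideanSpace ℝ (Fin (n+1))) 1) < ∞ := by
  classical
  set E := EuclideanSpace ℝ (Fin (n+1))
  set piE : E → E := fun x => ‖x‖⁻¹ • x with hπ
  set G : Fin (n+1) → ℝ → Set E := fun i ε => piE '' (euclInsert i ε '' closedBall 0 (n+1)) with hG
  have hGsub : ∀ (i : Fin (n+1)) (ε : ℝ), |ε| = 1 →
      euclInsert i ε '' closedBall 0 (n+1) ⊆ {x : E | 1 ≤ ‖x‖} := by
    rintro i ε hε x ⟨y, -, rfl⟩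
    have h1 : |euclInsert i ε y i| ≤ ‖euclInsert i ε y‖ := abs_coord_le_norm _ i
    rw [euclInsert_apply_same, hε] at h1
    exact h1
  have cover : sphere (0 : E) 1 ⊆ ⋃ i, (G i 1 ∪ G i (-1)) := by
    intro u hu
    have hu1 : ‖u‖ = 1 := by simpa using hu
    have hu0 : u ≠ 0 := by intro h; rw [h] at hu1; simp at hu1
    obtain ⟨i, -, hi⟩ := Finset.exists_max_image Finset.univ (fun j => |u j|) ⟨0, Finset.mem_univ 0⟩
    have ha : 0 < |u i| := by
      rcases lt_or_ge 0 (|u i|) with h | h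
      · exact h
      · exfalso
        apply hu0
        ext j
        have := hi j (Finset.mem_univ j)
        have : |u j| = 0 := le_antisymm (by linarith) (abs_nonneg _)
        simpa using this
    set x : E := |u i|⁻¹ • u with hx
    have hxnorm : ‖x‖ = |u i|⁻¹ := by
      rw [hx, norm_smul, hu1, norm_inv, Real.norm_eq_abs, abs_abs, mul_one]
    have hxi : |x i| = 1 := by
      have : x i = |u i|⁻¹ * u i := rfl
      rw [this, abs_mul, abs_inv, abs_abs, inv_mul_cancel₀ (ne_of_gt ha)]
    have hxj : ∀ j, |x j| ≤ 1 := by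
      intro j
      have : x j = |u i|⁻¹ * u j := rfl
      rw [this, abs_mul, abs_inv, abs_abs]
      rw [inv_mul_le_iff₀ ha, mul_one]
      exact hi j (Finset.mem_univ j)
    have hy : euclRemove i x ∈ closedBall (0 : EuclideanSpace ℝ (Fin n)) (n+1) := by
      rw [mem_closedBall, dist_zero_right, EuclideanSpace.norm_eq]
      have hsum : (∑ k : Fin n, ‖euclRemove i x k‖ ^ 2) ≤ (n : ℝ) := by
        calc (∑ k : Fin n, ‖euclRemove i x k‖ ^ 2) ≤ ∑ _k : Fin n, (1:ℝ) := by
              apply Finset.sum_le_sum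
              intro k _
              have := hxj (i.succAbove k)
              have h2 : ‖euclRemove i x k‖ = |x (i.succAbove k)| := by
                rw [euclRemove_apply, Real.norm_eq_abs]
              rw [h2]
              nlinarith [abs_nonneg (x (i.succAbove k))]
          _ = (n : ℝ) := by simp
      calc Real.sqrt (∑ k : Fin n, ‖euclRemove i x k‖ ^ 2) ≤ Real.sqrt (n : ℝ) :=
            Real.sqrt_le_sqrt hsum
        _ ≤ Real.sqrt (((n:ℝ)+1)^2) :=
            Real.sqrt_le_sqrt (by nlinarith [Nat.cast_nonneg (α := ℝ) n])
        _ = (n : ℝ) + 1 := Real.sqrt_sq (by positivity)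
    have hπx : piE x = u := by
      rw [hπ]
      simp only
      rw [hxnorm, inv_inv, hx, smul_smul, mul_inv_cancel₀ (ne_of_gt ha), one_smul]
    have hxmem : x ∈ euclInsert i (x i) '' closedBall 0 (n+1) :=
      ⟨euclRemove i x, hy, euclInsert_euclRemove i x⟩
    rcases abs_eq (by norm_num : (0:ℝ) ≤ 1) |>.mp hxi with h1 | h1
    · exact Set.mem_iUnion.mpr ⟨i, Or.inl ⟨x, by rwa [h1] at hxmem, hπx⟩⟩
    · exact Set.mem_iUnion.mpr ⟨i, Or.inr ⟨x, by rwa [h1] at hxmem, hπx⟩⟩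
  have hGfin : ∀ (i : Fin (n+1)) (ε : ℝ), |ε| = 1 → μH[(n:ℝ)] (G i ε) < ∞ := by
    intro i ε hε
    have h1 : μH[(n:ℝ)] (G i ε) ≤ (2:ℝ≥0) ^ (n:ℝ) *
        μH[(n:ℝ)] (euclInsert i ε '' closedBall 0 (n+1)) :=
      (lipschitzOn_normalize.mono (hGsub i ε hε)).hausdorffMeasure_image_le (by positivity)
    rw [(isometry_insertNth i ε).hausdorffMeasure_image
      (Or.inl (by positivity)) (closedBall 0 (n+1))] at h1
    refine lt_of_le_of_lt h1 (ENNReal.mul_lt_top ?_ ?_)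
    · exact ENNReal.rpow_lt_top_of_nonneg (by positivity) (by simp)
    · exact mu_lt_top_of_bounded (subset_refl _)
  calc μH[(n:ℝ)] (sphere (0:E) 1) ≤ μH[(n:ℝ)] (⋃ i, (G i 1 ∪ G i (-1))) := measure_mono cover
    _ ≤ ∑' i : Fin (n+1), μH[(n:ℝ)] (G i 1 ∪ G i (-1)) := measure_iUnion_le _
    _ < ∞ := by
        rw [tsum_fintype]
        refine ENNReal.sum_lt_top.mpr (fun i _ => ?_)
        refine lt_of_le_of_lt (measure_union_le _ _) (ENNReal.add_lt_top.mpr ⟨?_, ?_⟩)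
        · exact hGfin i 1 (by norm_num)
        · exact hGfin i (-1) (by norm_num)

end SphereAux

namespace SphereAux

lemma sq_norm_eq (m : ℕ) (y : EuclideanSpace ℝ (Fin m)) : ‖y‖ ^ 2 = ∑ k, ‖y k‖ ^ 2 := by
  rw [EuclideanSpace.norm_eq, Real.sq_sqrt]
  positivity

lemma mu_closedBall_le_sphere (n : ℕ) :
    μH[(n : ℝ)] (closedBall (0 : EuclideanSpace ℝ (Fin n)) 1)
      ≤ μH[(n : ℝ)] (sphere (0 : EuclideanSpace ℝ (Fin (n+1))) 1) := by
  have hsub : closedBall (0 : EuclideanSpace ℝ (Fin n)) 1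
      ⊆ euclRemove 0 '' sphere (0 : EuclideanSpace ℝ (Fin (n+1))) 1 := by
    intro y hy
    have hy1 : ‖y‖ ≤ 1 := by simpa [dist_zero_right] using hy
    set t : ℝ := Real.sqrt (1 - ‖y‖ ^ 2) with ht
    have ht2 : t ^ 2 = 1 - ‖y‖ ^ 2 := Real.sq_sqrt (by nlinarith [norm_nonneg y])
    set u := euclInsert 0 t y with hu
    have hun : ‖u‖ = 1 := by
      have h2 : ‖u‖ ^ 2 = 1 := by
        rw [sq_norm_eq]
        rw [Fin.sum_univ_succAbove (fun j => ‖u j‖ ^ 2) 0]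
        have : ∑ k : Fin n, ‖u ((0 : Fin (n+1)).succAbove k)‖ ^ 2 = ∑ k, ‖y k‖ ^ 2 := by
          apply Finset.sum_congr rfl
          intro k _
          rw [hu, euclInsert_apply_succAbove]
        rw [this, ← sq_norm_eq, hu, euclInsert_apply_same]
        rw [Real.norm_eq_abs, sq_abs, ht2]
        ring
      nlinarith [norm_nonneg u]
    refine ⟨u, by simpa using hun, ?_⟩
    ext k
    rw [euclRemove_apply, hu, euclInsert_apply_succAbove]
  calc μH[(n:ℝ)] (closedBall (0 : EuclideanSpace ℝ (Fin n)) 1)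
      ≤ μH[(n:ℝ)] (euclRemove 0 '' sphere (0 : EuclideanSpace ℝ (Fin (n+1))) 1) :=
        measure_mono hsub
    _ ≤ (1:ℝ≥0) ^ (n:ℝ) * μH[(n:ℝ)] (sphere (0 : EuclideanSpace ℝ (Fin (n+1))) 1) :=
        (lipschitz_euclRemove 0).hausdorffMeasure_image_le (by positivity) _
    _ = μH[(n:ℝ)] (sphere (0 : EuclideanSpace ℝ (Fin (n+1))) 1) := by simp

lemma mu_closedBall_pos (n : ℕ) (hn : 1 ≤ n) :
    0 < μH[(n : ℝ)] (closedBall (0 : EuclideanSpace ℝ (Fin n)) 1) := by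
  refine lt_of_lt_of_le ?_ (vol_toPi_le_mu _)
  have hsub : closedBall (0 : Fin n → ℝ) ((n:ℝ)⁻¹) ⊆ toPi (closedBall 0 1) := by
    intro z hz
    have hz' : ∀ k, |z k| ≤ (n:ℝ)⁻¹ := by
      intro k
      have h1 : dist z 0 ≤ (n:ℝ)⁻¹ := by simpa using hz
      have h2 := dist_le_pi_dist z 0 k
      have : dist (z k) 0 ≤ (n:ℝ)⁻¹ := le_trans h2 h1
      simpa [Real.dist_eq] using this
    refine ⟨(WithLp.equiv 2 (Fin n → ℝ)).symm z, ?_, rfl⟩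
    rw [mem_closedBall, dist_zero_right]
    have hsq : ‖(WithLp.equiv 2 (Fin n → ℝ)).symm z‖ ^ 2 ≤ 1 := by
      rw [sq_norm_eq]
      have hnp : (0:ℝ) < n := by exact_mod_cast hn
      calc (∑ k, ‖((WithLp.equiv 2 (Fin n → ℝ)).symm z) k‖ ^ 2)
          ≤ ∑ _k : Fin n, ((n:ℝ)⁻¹) ^ 2 := by
            apply Finset.sum_le_sum
            intro k _
            have := hz' k
            have h0 : ‖((WithLp.equiv 2 (Fin n → ℝ)).symm z) k‖ = |z k| := rfl
            rw [h0, sq_abs]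
            have h3 := abs_le.mp this
            nlinarith [h3.1, h3.2]
        _ = (n:ℝ) * ((n:ℝ)⁻¹)^2 := by simp [mul_comm]
        _ ≤ 1 := by
            rw [pow_two]
            rw [← mul_assoc, mul_inv_cancel₀ (ne_of_gt hnp)]
            rw [one_mul]
            exact inv_le_one_of_one_le₀ (by exact_mod_cast hn)
    nlinarith [norm_nonneg ((WithLp.equiv 2 (Fin n → ℝ)).symm z)]
  refine lt_of_lt_of_le ?_ (measure_mono hsub)
  have hnp : (0:ℝ) < (n:ℝ)⁻¹ := by
    have : (0:ℝ) < n := by exact_mod_cast hn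
    positivity
  exact measure_closedBall_pos volume 0 hnp

lemma mu_sphere_pos (n : ℕ) (hn : 1 ≤ n) :
    0 < μH[(n : ℝ)] (sphere (0 : EuclideanSpace ℝ (Fin (n+1))) 1) :=
  lt_of_lt_of_le (mu_closedBall_pos n hn) (mu_closedBall_le_sphere n)

end SphereAux

namespace SphereAux

lemma vol_sphere_zero (n : ℕ) (hn : 1 ≤ n) :
    μH[(n : ℝ)] (sphere (0 : EuclideanSpace ℝ (Fin n)) 1) = 0 := by
  apply mu_null_of_vol_null
  haveI : Nontrivial (EuclideanSpace ℝ (Fin n)) := by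
    refine nontrivial_of_ne (EuclideanSpace.single ⟨0, hn⟩ 1) 0 ?_
    intro h
    have := congrArg (fun f : EuclideanSpace ℝ (Fin n) => f ⟨0, hn⟩) h
    simp at this
  have hvol : volume (sphere (0 : EuclideanSpace ℝ (Fin n)) 1) = 0 :=
    Measure.addHaar_sphere volume 0 1
  have hq : toPi (sphere (0 : EuclideanSpace ℝ (Fin n)) 1)
      = (WithLp.toLp 2 : (Fin n → ℝ) → EuclideanSpace ℝ (Fin n)) ⁻¹' (sphere 0 1) := by
    ext z; constructor
    · rintro ⟨y, hy, rfl⟩; simpa using hy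
    · intro hz; exact ⟨WithLp.toLp 2 z, hz, rfl⟩
  rw [hq]
  rw [MeasurePreserving.measure_preimage
    (PiLp.volume_preserving_toLp (Fin n))
    ((isClosed_sphere.measurableSet).nullMeasurableSet)]
  exact hvol

lemma mu_slice_null (n : ℕ) (hn : 1 ≤ n) (v : EuclideanSpace ℝ (Fin (n+1))) (hv : v ≠ 0) :
    μH[(n : ℝ)] {u : EuclideanSpace ℝ (Fin (n+1)) | ‖u‖ = 1 ∧ ⟪v, u⟫ = 0} = 0 := by
  have : ∀ E : Type, E = EuclideanSpace ℝ (Fin (n+1)) → True := fun _ _ => trivial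
  set W := (Submodule.span ℝ {v})ᗮ with hWdef
  haveI : Fact (Module.finrank ℝ (EuclideanSpace ℝ (Fin (n+1))) = n + 1) :=
    ⟨finrank_euclideanSpace_fin⟩
  have hW : Module.finrank ℝ W = n := Submodule.finrank_orthogonal_span_singleton hv
  let e : W ≃ₗᵢ[ℝ] EuclideanSpace ℝ (Fin n) :=
    ((stdOrthonormalBasis ℝ W).reindex (finCongr (by rw [hW]))).repr
  have hsub : {u : EuclideanSpace ℝ (Fin (n+1)) | ‖u‖ = 1 ∧ ⟪v, u⟫ = 0}
      ⊆ (Subtype.val : W → EuclideanSpace ℝ (Fin (n+1))) '' {w : W | ‖w‖ = 1} := by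
    rintro u ⟨hu1, hu2⟩
    have huW : u ∈ W := by
      rw [hWdef, Submodule.mem_orthogonal_singleton_iff_inner_left]
      rw [real_inner_comm]
      exact hu2
    exact ⟨⟨u, huW⟩, by simpa using hu1, rfl⟩
  have h1 : μH[(n:ℝ)] {u : EuclideanSpace ℝ (Fin (n+1)) | ‖u‖ = 1 ∧ ⟪v, u⟫ = 0}
      ≤ μH[(n:ℝ)] ((Subtype.val : W → EuclideanSpace ℝ (Fin (n+1))) '' {w : W | ‖w‖ = 1}) :=
    measure_mono hsub
  have hval : Isometry (Subtype.val : W → EuclideanSpace ℝ (Fin (n+1))) := fun x y => rfl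
  rw [hval.hausdorffMeasure_image (Or.inl (by positivity))] at h1
  have h2 : μH[(n:ℝ)] {w : W | ‖w‖ = 1} = μH[(n:ℝ)] (e '' {w : W | ‖w‖ = 1}) :=
    (e.isometry.hausdorffMeasure_image (Or.inl (by positivity)) _).symm
  have h3 : e '' {w : W | ‖w‖ = 1} ⊆ sphere (0 : EuclideanSpace ℝ (Fin n)) 1 := by
    rintro x ⟨w, hw, rfl⟩
    simp only [mem_sphere, dist_zero_right]
    rw [e.norm_map]
    exact hw
  have h4 : μH[(n:ℝ)] (e '' {w : W | ‖w‖ = 1}) ≤ 0 := by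
    rw [← vol_sphere_zero n hn]
    exact measure_mono h3
  exact le_antisymm (h1.trans (h2.le.trans h4)) zero_le

end SphereAux

open MeasureTheory Metric Filter
open scoped RealInnerProductSpace ENNReal

/-- sign(t) = 1 if t > 0 and -1 otherwise. -/
noncomputable def sgn (t : ℝ) : ℝ := if 0 < t then 1 else -1

/-- The uniform probability measure on the unit sphere of `EuclideanSpace ℝ (Fin d)`:
the (d-1)-dimensional Hausdorff measure restricted to the sphere, normalized to mass 1. -/
noncomputable def sphereUniform (d : ℕ) : Measure (EuclideanSpace ℝ (Fin d)) :=
  (μH[(d : ℝ) - 1] (Metric.sphere (0 : EuclideanSpace ℝ (Fin d)) 1))⁻¹ •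
    (μH[(d : ℝ) - 1]).restrict (Metric.sphere (0 : EuclideanSpace ℝ (Fin d)) 1)

/-- The population gradient-direction estimate
`g(δ) = ∫_S sign(S (x_t + δ u)) · u dσ(u)`. -/
noncomputable def gEst (d : ℕ) (S : EuclideanSpace ℝ (Fin d) → ℝ)
    (xt : EuclideanSpace ℝ (Fin d)) (δ : ℝ) : EuclideanSpace ℝ (Fin d) :=
  ∫ u, sgn (S (xt + δ • u)) • u ∂(sphereUniform d)

namespace SphereAux

lemma abs_sgn (t : ℝ) : |sgn t| = 1 := by
  rw [sgn]; split_ifs <;> norm_num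

lemma H_eq (n : ℕ) :
    (μH[((n+1 : ℕ) : ℝ) - 1] : Measure (EuclideanSpace ℝ (Fin (n+1)))) = μH[(n:ℝ)] := by
  congr 1
  push_cast
  ring

lemma sphereUniform_eq (n : ℕ) :
    sphereUniform (n+1) =
      (μH[(n:ℝ)] (sphere (0 : EuclideanSpace ℝ (Fin (n+1))) 1))⁻¹ •
        (μH[(n:ℝ)] : Measure (EuclideanSpace ℝ (Fin (n+1)))).restrict (sphere 0 1) := by
  rw [sphereUniform, H_eq]

lemma isProb (n : ℕ) (hn : 1 ≤ n) : IsProbabilityMeasure (sphereUniform (n+1)) := by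
  constructor
  rw [sphereUniform_eq]
  rw [Measure.smul_apply, Measure.restrict_apply MeasurableSet.univ, Set.univ_inter,
    smul_eq_mul]
  exact ENNReal.inv_mul_cancel (ne_of_gt (mu_sphere_pos n hn)) (ne_of_lt (mu_sphere_lt_top n))

lemma sphere_preimage (n : ℕ)
    (R : EuclideanSpace ℝ (Fin (n+1)) ≃ₗᵢ[ℝ] EuclideanSpace ℝ (Fin (n+1))) :
    ⇑R ⁻¹' (sphere 0 1) = sphere 0 1 := by
  ext x
  simp [mem_sphere, dist_zero_right, R.norm_map]

lemma sphereUniform_map (n : ℕ)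
    (R : EuclideanSpace ℝ (Fin (n+1)) ≃ₗᵢ[ℝ] EuclideanSpace ℝ (Fin (n+1))) :
    Measure.map ⇑R (sphereUniform (n+1)) = sphereUniform (n+1) := by
  rw [sphereUniform_eq, Measure.map_smul]
  congr 1
  have hmeas : Measurable ⇑R := R.continuous.measurable
  have hmap : Measure.map ⇑R (μH[(n:ℝ)] : Measure (EuclideanSpace ℝ (Fin (n+1)))) = μH[(n:ℝ)] := by
    have := R.toIsometryEquiv.map_hausdorffMeasure (n:ℝ)
    simpa using this
  calc Measure.map ⇑R ((μH[(n:ℝ)]).restrict (sphere 0 1))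
      = Measure.map ⇑R ((μH[(n:ℝ)]).restrict (⇑R ⁻¹' (sphere 0 1))) := by
        rw [sphere_preimage]
    _ = (Measure.map ⇑R μH[(n:ℝ)]).restrict (sphere 0 1) :=
        (Measure.restrict_map hmeas isClosed_sphere.measurableSet).symm
    _ = (μH[(n:ℝ)]).restrict (sphere 0 1) := by rw [hmap]

lemma sphereUniform_measurePreserving (n : ℕ)
    (R : EuclideanSpace ℝ (Fin (n+1)) ≃ₗᵢ[ℝ] EuclideanSpace ℝ (Fin (n+1))) :
    MeasurePreserving ⇑R (sphereUniform (n+1)) (sphereUniform (n+1)) :=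
  ⟨R.continuous.measurable, sphereUniform_map n R⟩

lemma integral_comp_linIso (n : ℕ)
    (R : EuclideanSpace ℝ (Fin (n+1)) ≃ₗᵢ[ℝ] EuclideanSpace ℝ (Fin (n+1)))
    (f : EuclideanSpace ℝ (Fin (n+1)) → ℝ) :
    ∫ u, f (R u) ∂(sphereUniform (n+1)) = ∫ u, f u ∂(sphereUniform (n+1)) :=
  (sphereUniform_measurePreserving n R).integral_comp
    (R.toHomeomorph.measurableEmbedding) f

lemma sigma_slice_null (n : ℕ) (hn : 1 ≤ n) (v : EuclideanSpace ℝ (Fin (n+1))) (hv : v ≠ 0) :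
    sphereUniform (n+1) {u | ⟪v, u⟫ = 0} = 0 := by
  have hmeas : MeasurableSet {u : EuclideanSpace ℝ (Fin (n+1)) | ⟪v, u⟫ = 0} := by
    have hc : Continuous fun u : EuclideanSpace ℝ (Fin (n+1)) => ⟪v, u⟫ :=
      continuous_const.inner continuous_id
    exact (isClosed_eq hc continuous_const).measurableSet
  rw [sphereUniform_eq, Measure.smul_apply, Measure.restrict_apply hmeas, smul_eq_mul]
  have hsub : {u : EuclideanSpace ℝ (Fin (n+1)) | ⟪v, u⟫ = 0} ∩ sphere 0 1
      ⊆ {u : EuclideanSpace ℝ (Fin (n+1)) | ‖u‖ = 1 ∧ ⟪v, u⟫ = 0} := by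
    rintro u ⟨h1, h2⟩
    exact ⟨by simpa using h2, h1⟩
  rw [measure_mono_null hsub (mu_slice_null n hn v hv), mul_zero]

lemma sigma_ae_sphere (n : ℕ) :
    ∀ᵐ u ∂(sphereUniform (n+1)), u ∈ sphere (0 : EuclideanSpace ℝ (Fin (n+1))) 1 := by
  rw [sphereUniform_eq]
  exact Measure.ae_smul_measure (ae_restrict_mem isClosed_sphere.measurableSet) _

lemma integrable_sgn_smul (n : ℕ) (hn : 1 ≤ n) (h : EuclideanSpace ℝ (Fin (n+1)) → ℝ)
    (hh : Continuous h) :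
    Integrable (fun u => sgn (h u) • u) (sphereUniform (n+1)) := by
  haveI := isProb n hn
  have heq : (fun u => sgn (h u) • u)
      = Set.piecewise {x : EuclideanSpace ℝ (Fin (n+1)) | 0 < h x}
        (fun u => u) (fun u => -u) := by
    funext u
    by_cases hu : 0 < h u
    · simp [sgn, hu, Set.piecewise, Set.mem_setOf_eq]
    · simp [sgn, hu, Set.piecewise, Set.mem_setOf_eq]
  have hmeas : Measurable (fun u => sgn (h u) • u) := by
    rw [heq]
    exact Measurable.piecewise (isOpen_lt continuous_const hh).measurableSet
      measurable_id measurable_neg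
  refine Integrable.mono' (integrable_const 1) hmeas.aestronglyMeasurable ?_
  filter_upwards [sigma_ae_sphere n] with u hu
  have h1 : ‖u‖ = 1 := by simpa using hu
  rw [norm_smul, Real.norm_eq_abs, abs_sgn, h1, one_mul]

end SphereAux

namespace SphereAux

lemma sgn_mul_self (t : ℝ) : sgn t * t = |t| := by
  rw [sgn]
  split_ifs with h
  · rw [one_mul, abs_of_pos h]
  · push_neg at h
    rw [abs_of_nonpos h]; ring

lemma key_w (n : ℕ) (hn : 1 ≤ n) (v : EuclideanSpace ℝ (Fin (n+1))) (hv : v ≠ 0) :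
    ∃ c : ℝ, 0 < c ∧
      (∫ u, sgn ⟪v, u⟫ • u ∂(sphereUniform (n+1))) = c • v := by
  haveI := isProb n hn
  have hcont : Continuous fun u : EuclideanSpace ℝ (Fin (n+1)) => ⟪v, u⟫ :=
    continuous_const.inner continuous_id
  have hint : Integrable (fun u => sgn ⟪v, u⟫ • u) (sphereUniform (n+1)) :=
    integrable_sgn_smul n hn _ hcont
  set σ := sphereUniform (n+1) with hσ
  set w := ∫ u, sgn ⟪v, u⟫ • u ∂σ with hwdef
  -- Step 1: w is orthogonal to everything orthogonal to v
  have step1 : ∀ y : EuclideanSpace ℝ (Fin (n+1)), ⟪y, v⟫ = 0 → ⟪y, w⟫ = 0 := by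
    intro y hy
    rcases eq_or_ne y 0 with rfl | hy0
    · simp
    set K := (Submodule.span ℝ {y})ᗮ with hK
    set R := K.reflection with hR
    have hRv : R v = v := Submodule.reflection_mem_subspace_eq_self
      (by rw [hK, Submodule.mem_orthogonal_singleton_iff_inner_left, real_inner_comm]; exact hy)
    have hRy : R y = -y := Submodule.reflection_orthogonalComplement_singleton_eq_neg y
    have h1 : ⟪y, w⟫ = ∫ u, sgn ⟪v, u⟫ * ⟪y, u⟫ ∂σ := by
      rw [hwdef, ← integral_inner hint y]
      congr 1
      funext u
      rw [real_inner_smul_right]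
    have h4 : ∀ u, sgn ⟪v, R u⟫ * ⟪y, R u⟫ = -(sgn ⟪v, u⟫ * ⟪y, u⟫) := by
      intro u
      have hv' : ⟪v, R u⟫ = ⟪v, u⟫ := by
        conv_lhs => rw [← hRv]
        rw [R.inner_map_map]
      have hy' : ⟪y, R u⟫ = -⟪y, u⟫ := by
        have : ⟪y, R u⟫ = ⟪R (R y), R u⟫ := by rw [Submodule.reflection_reflection]
        rw [this, R.inner_map_map, hRy, inner_neg_left]
      rw [hv', hy']
      ring
    have h5 : ∫ u, sgn ⟪v, u⟫ * ⟪y, u⟫ ∂σ = -∫ u, sgn ⟪v, u⟫ * ⟪y, u⟫ ∂σ := by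
      conv_lhs => rw [← integral_comp_linIso n R (fun u => sgn ⟪v, u⟫ * ⟪y, u⟫)]
      rw [show (fun u => sgn ⟪v, R u⟫ * ⟪y, R u⟫) = fun u => -(sgn ⟪v, u⟫ * ⟪y, u⟫) from
        funext h4]
      rw [integral_neg]
    rw [h1]
    linarith [h5]
  -- Step 2: w ∈ span {v}
  have step2 : w ∈ Submodule.span ℝ {v} := by
    rw [← Submodule.orthogonal_orthogonal (Submodule.span ℝ {v})]
    rw [Submodule.mem_orthogonal]
    intro y hy
    apply step1
    exact (Submodule.mem_orthogonal_singleton_iff_inner_left).mp hy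
  obtain ⟨a, ha⟩ := Submodule.mem_span_singleton.mp step2
  -- Step 3: the coefficient is positive
  have hJint : Integrable (fun u => |⟪v, u⟫|) σ := by
    refine Integrable.mono' (integrable_const ‖v‖) (hcont.abs.aestronglyMeasurable) ?_
    filter_upwards [sigma_ae_sphere n] with u hu
    have h1 : ‖u‖ = 1 := by simpa using hu
    rw [Real.norm_eq_abs, abs_abs]
    calc |⟪v, u⟫| ≤ ‖v‖ * ‖u‖ := abs_real_inner_le_norm v u
      _ = ‖v‖ := by rw [h1, mul_one]
  have hvw : ⟪v, w⟫ = ∫ u, |⟪v, u⟫| ∂σ := by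
    rw [hwdef, ← integral_inner hint v]
    congr 1
    funext u
    rw [real_inner_smul_right, sgn_mul_self]
  have hJpos : 0 < ∫ u, |⟪v, u⟫| ∂σ := by
    rcases lt_or_eq_of_le (integral_nonneg (μ := σ) (f := fun u => |⟪v, u⟫|) (fun u => abs_nonneg _)) with h | h
    · exact h
    exfalso
    have h0 : ∀ᵐ u ∂σ, |⟪v, u⟫| = 0 := by
      have := (integral_eq_zero_iff_of_nonneg (fun u => abs_nonneg _) hJint).mp h.symm
      filter_upwards [this] with u hu using hu
    have hz : σ {u | ¬ (⟪v, u⟫ = 0)} = 0 := by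
      have h1 : ∀ᵐ u ∂σ, ⟪v, u⟫ = 0 := by
        filter_upwards [h0] with u hu using abs_eq_zero.mp hu
      exact h1
    have huniv : (σ Set.univ) ≤ σ {u | ⟪v, u⟫ = 0} + σ {u | ¬ (⟪v, u⟫ = 0)} := by
      refine le_trans (measure_mono ?_) (measure_union_le _ _)
      intro u _
      by_cases hc : ⟪v, u⟫ = 0
      · exact Or.inl hc
      · exact Or.inr hc
    rw [measure_univ, sigma_slice_null n hn v hv, hz, add_zero] at huniv
    simp at huniv
  have hanorm : ⟪v, w⟫ = a * ‖v‖ ^ 2 := by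
    rw [← ha, real_inner_smul_right, real_inner_self_eq_norm_sq]
  have hapos : 0 < a := by
    have hvn : (0:ℝ) < ‖v‖ ^ 2 := by
      have := norm_pos_iff.mpr hv
      positivity
    have h2 : a * ‖v‖ ^ 2 = ∫ u, |⟪v, u⟫| ∂σ := by rw [← hanorm, hvw]
    nlinarith [hJpos, h2]
  exact ⟨a, hapos, ha.symm⟩

end SphereAux

namespace SphereAux

lemma taylor_bound {d : ℕ} (L : ℝ) (hL : 0 ≤ L) (S : EuclideanSpace ℝ (Fin d) → ℝ)
    (hS : Differentiable ℝ S)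
    (hLip : ∀ x y : EuclideanSpace ℝ (Fin d), ‖gradient S x - gradient S y‖ ≤ L * ‖x - y‖)
    (xt : EuclideanSpace ℝ (Fin d)) (hxt : S xt = 0)
    (δ : ℝ) (hδ : 0 < δ) (u : EuclideanSpace ℝ (Fin d)) (hu : ‖u‖ = 1) :
    |S (xt + δ • u) - δ * ⟪gradient S xt, u⟫| ≤ L * δ ^ 2 := by
  set v := gradient S xt with hv
  set f : EuclideanSpace ℝ (Fin d) → ℝ :=
    fun x => S x - (InnerProductSpace.toDual ℝ _ v) x with hf
  set D : EuclideanSpace ℝ (Fin d) → (EuclideanSpace ℝ (Fin d) →L[ℝ] ℝ) :=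
    fun x => (InnerProductSpace.toDual ℝ _ (gradient S x)) - (InnerProductSpace.toDual ℝ _ v)
    with hDdef
  have hD : ∀ x, HasFDerivAt f (D x) x := by
    intro x
    have h1 : HasFDerivAt S (InnerProductSpace.toDual ℝ _ (gradient S x) :
        EuclideanSpace ℝ (Fin d) →L[ℝ] ℝ) x :=
      hasGradientAt_iff_hasFDerivAt.mp (hS x).hasGradientAt
    exact h1.sub ((InnerProductSpace.toDual ℝ _ v).hasFDerivAt)
  have hbound : ∀ x ∈ closedBall xt δ, ‖D x‖ ≤ L * δ := by
    intro x hx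
    have h1 : D x = InnerProductSpace.toDual ℝ _ (gradient S x - v) := by
      rw [hDdef]; simp only; rw [map_sub]
    rw [h1, (InnerProductSpace.toDual ℝ _).norm_map]
    calc ‖gradient S x - v‖ ≤ L * ‖x - xt‖ := hLip x xt
      _ ≤ L * δ := by
          have h3 : ‖x - xt‖ ≤ δ := by
            rw [← dist_eq_norm]; exact mem_closedBall.mp hx
          nlinarith
  have hmem1 : xt ∈ closedBall xt δ := mem_closedBall_self (le_of_lt hδ)
  have hmem2 : xt + δ • u ∈ closedBall xt δ := by
    rw [mem_closedBall, dist_eq_norm, add_sub_cancel_left, norm_smul, Real.norm_eq_abs,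
      abs_of_pos hδ, hu, mul_one]
  have key := (convex_closedBall xt δ).norm_image_sub_le_of_norm_hasFDerivWithin_le
    (fun x hx => (hD x).hasFDerivWithinAt) hbound hmem1 hmem2
  have h4 : ‖(xt + δ • u) - xt‖ = δ := by
    rw [add_sub_cancel_left, norm_smul, Real.norm_eq_abs, abs_of_pos hδ, hu, mul_one]
  rw [h4] at key
  have h5 : f (xt + δ • u) - f xt = S (xt + δ • u) - δ * ⟪v, u⟫ := by
    rw [hf]
    simp only
    rw [InnerProductSpace.toDual_apply_apply, InnerProductSpace.toDual_apply_apply, hxt]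
    rw [inner_add_right, real_inner_smul_right]
    ring
  rw [h5] at key
  calc |S (xt + δ • u) - δ * ⟪v, u⟫| = ‖S (xt + δ • u) - δ * ⟪v, u⟫‖ := by
        rw [Real.norm_eq_abs]
    _ ≤ L * δ * δ := key
    _ = L * δ ^ 2 := by ring

lemma sgn_eq_of_far {d : ℕ} (L : ℝ) (hL : 0 ≤ L) (S : EuclideanSpace ℝ (Fin d) → ℝ)
    (hS : Differentiable ℝ S)
    (hLip : ∀ x y : EuclideanSpace ℝ (Fin d), ‖gradient S x - gradient S y‖ ≤ L * ‖x - y‖)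
    (xt : EuclideanSpace ℝ (Fin d)) (hxt : S xt = 0)
    (δ : ℝ) (hδ : 0 < δ) (u : EuclideanSpace ℝ (Fin d)) (hu : ‖u‖ = 1)
    (hfar : L * δ < |⟪gradient S xt, u⟫|) :
    sgn (S (xt + δ • u)) = sgn ⟪gradient S xt, u⟫ := by
  have key := taylor_bound L hL S hS hLip xt hxt δ hδ u hu
  set t := ⟪gradient S xt, u⟫
  have habs := abs_le.mp key
  rcases lt_or_ge (L * δ) t with hpos | hother
  · have h1 : 0 < S (xt + δ • u) := by nlinarith
    rw [sgn, sgn, if_pos h1, if_pos (by nlinarith : (0:ℝ) < t)]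
  · have hneg : t < -(L * δ) := by
      rcases abs_cases t with ⟨he, -⟩ | ⟨he, -⟩
      · nlinarith
      · nlinarith
    have h1 : ¬ (0 < S (xt + δ • u)) := by nlinarith
    have h2 : ¬ (0 < t) := by nlinarith
    rw [sgn, sgn, if_neg h1, if_neg h2]

end SphereAux

namespace SphereAux

lemma band_measurable (n : ℕ) (v : EuclideanSpace ℝ (Fin (n+1))) (c : ℝ) :
    MeasurableSet {u : EuclideanSpace ℝ (Fin (n+1)) | |⟪v, u⟫| ≤ c} := by
  have hc : Continuous fun u : EuclideanSpace ℝ (Fin (n+1)) => |⟪v, u⟫| :=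
    (continuous_const.inner continuous_id).abs
  exact (isClosed_le hc continuous_const).measurableSet

lemma approx_bound (n : ℕ) (hn : 1 ≤ n) (L : ℝ) (hL : 0 ≤ L)
    (S : EuclideanSpace ℝ (Fin (n+1)) → ℝ) (hS : Differentiable ℝ S)
    (hLip : ∀ x y : EuclideanSpace ℝ (Fin (n+1)), ‖gradient S x - gradient S y‖ ≤ L * ‖x - y‖)
    (xt : EuclideanSpace ℝ (Fin (n+1))) (hxt : S xt = 0)
    (δ : ℝ) (hδ : 0 < δ) :
    ‖gEst (n+1) S xt δ - ∫ u, sgn ⟪gradient S xt, u⟫ • u ∂(sphereUniform (n+1))‖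
      ≤ 2 * (sphereUniform (n+1) {u | |⟪gradient S xt, u⟫| ≤ L * δ}).toReal := by
  haveI := isProb n hn
  set σ := sphereUniform (n+1) with hσ
  set v := gradient S xt with hv
  set B := {u : EuclideanSpace ℝ (Fin (n+1)) | |⟪v, u⟫| ≤ L * δ} with hB
  have hBmeas : MeasurableSet B := band_measurable n v (L * δ)
  have hint1 : Integrable (fun u => sgn (S (xt + δ • u)) • u) σ := by
    apply integrable_sgn_smul n hn
    exact hS.continuous.comp (continuous_const.add (continuous_const_smul δ))
  have hint2 : Integrable (fun u => sgn ⟪v, u⟫ • u) σ :=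
    integrable_sgn_smul n hn _ (continuous_const.inner continuous_id)
  have heq : gEst (n+1) S xt δ - (∫ u, sgn ⟪v, u⟫ • u ∂σ)
      = ∫ u, (sgn (S (xt + δ • u)) • u - sgn ⟪v, u⟫ • u) ∂σ := by
    rw [gEst, integral_sub hint1 hint2]
  rw [heq]
  have hbound : ∀ᵐ u ∂σ, ‖sgn (S (xt + δ • u)) • u - sgn ⟪v, u⟫ • u‖
      ≤ B.indicator (fun _ => (2:ℝ)) u := by
    filter_upwards [sigma_ae_sphere n] with u hu
    have hu1 : ‖u‖ = 1 := by simpa using hu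
    by_cases hmem : u ∈ B
    · rw [Set.indicator_of_mem hmem]
      calc ‖sgn (S (xt + δ • u)) • u - sgn ⟪v, u⟫ • u‖
          ≤ ‖sgn (S (xt + δ • u)) • u‖ + ‖sgn ⟪v, u⟫ • u‖ := norm_sub_le _ _
        _ = 2 := by
            rw [norm_smul, norm_smul, Real.norm_eq_abs, Real.norm_eq_abs,
              abs_sgn, abs_sgn, hu1]
            norm_num
    · rw [Set.indicator_of_notMem hmem]
      have hfar : L * δ < |⟪v, u⟫| := by
        rw [hB, Set.mem_setOf_eq, not_le] at hmem
        exact hmem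
      rw [sgn_eq_of_far L hL S hS hLip xt hxt δ hδ u hu1 hfar, sub_self, norm_zero]
  have hgint : Integrable (B.indicator (fun _ => (2:ℝ))) σ :=
    (integrable_const (2:ℝ)).indicator hBmeas
  calc ‖∫ u, (sgn (S (xt + δ • u)) • u - sgn ⟪v, u⟫ • u) ∂σ‖
      ≤ ∫ u, B.indicator (fun _ => (2:ℝ)) u ∂σ := norm_integral_le_of_norm_le hgint hbound
    _ = 2 * (σ B).toReal := by
        rw [integral_indicator_const (2:ℝ) hBmeas, smul_eq_mul, mul_comm]; rfl

lemma band_tendsto (n : ℕ) (hn : 1 ≤ n) (v : EuclideanSpace ℝ (Fin (n+1))) (hv : v ≠ 0)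
    (L : ℝ) (hL : 0 < L) :
    Tendsto (fun δ : ℝ => (sphereUniform (n+1) {u | |⟪v, u⟫| ≤ L * δ}).toReal)
      (nhdsWithin 0 (Set.Ioi 0)) (nhds 0) := by
  haveI := isProb n hn
  set σ := sphereUniform (n+1) with hσ
  set s : ℕ → Set (EuclideanSpace ℝ (Fin (n+1))) :=
    fun k => {u | |⟪v, u⟫| ≤ L * (1 / (k + 1))} with hs
  have hmeas : ∀ k, NullMeasurableSet (s k) σ :=
    fun k => (band_measurable n v _).nullMeasurableSet
  have hanti : Antitone s := by
    intro j k hjk u hu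
    have h1 : L * (1 / ((k:ℝ) + 1)) ≤ L * (1 / ((j:ℝ) + 1)) := by
      have : (j:ℝ) + 1 ≤ (k:ℝ) + 1 := by
        have : (j:ℝ) ≤ k := by exact_mod_cast hjk
        linarith
      have hj : (0:ℝ) < (j:ℝ) + 1 := by positivity
      have hk : (0:ℝ) < (k:ℝ) + 1 := by positivity
      apply mul_le_mul_of_nonneg_left _ (le_of_lt hL)
      rw [div_le_div_iff₀ hk hj]
      linarith
    exact le_trans hu h1
  have hiInter : (⋂ k, s k) = {u | ⟪v, u⟫ = 0} := by
    ext u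
    simp only [Set.mem_iInter, hs, Set.mem_setOf_eq]
    constructor
    · intro h
      by_contra habs
      have hpos : 0 < |⟪v, u⟫| := abs_pos.mpr habs
      obtain ⟨k, hk⟩ := exists_nat_gt (L / |⟪v, u⟫|)
      have hk1 : (0:ℝ) < (k:ℝ) + 1 := by positivity
      have h2 : L * (1 / ((k:ℝ) + 1)) < |⟪v, u⟫| := by
        rw [mul_one_div, div_lt_iff₀ hk1]
        have h3 : L / |⟪v, u⟫| < (k:ℝ) + 1 := by linarith
        calc L = (L / |⟪v, u⟫|) * |⟪v, u⟫| := (div_mul_cancel₀ L (ne_of_gt hpos)).symm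
          _ < ((k:ℝ) + 1) * |⟪v, u⟫| := by
              apply mul_lt_mul_of_pos_right h3 hpos
          _ = |⟪v, u⟫| * ((k:ℝ) + 1) := by ring
      exact absurd (h k) (not_le.mpr h2)
    · intro h k
      rw [h, abs_zero]
      positivity
  have hseq : Tendsto (fun k => σ (s k)) atTop (nhds 0) := by
    have h1 := MeasureTheory.tendsto_measure_iInter_atTop hmeas hanti
      ⟨0, measure_ne_top σ _⟩
    rw [hiInter, sigma_slice_null n hn v hv] at h1
    exact h1
  have hENN : Tendsto (fun δ : ℝ => σ {u | |⟪v, u⟫| ≤ L * δ})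
      (nhdsWithin 0 (Set.Ioi 0)) (nhds 0) := by
    rw [ENNReal.tendsto_nhds_zero]
    intro ε hε
    obtain ⟨k, hk⟩ := (hseq.eventually_lt_const hε).exists
    have hk1 : (0:ℝ) < 1 / ((k:ℝ)+1) := by positivity
    filter_upwards [Ioo_mem_nhdsGT_of_mem
      (Set.mem_Ico.mpr ⟨le_refl (0:ℝ), hk1⟩)] with δ hδ
    rcases hδ with ⟨hδ0, hδ1⟩
    refine le_trans (measure_mono ?_) (le_of_lt hk)
    intro u hu
    have : L * δ ≤ L * (1 / ((k:ℝ) + 1)) :=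
      mul_le_mul_of_nonneg_left (le_of_lt hδ1) (le_of_lt hL)
    exact le_trans hu this
  have hfin := (ENNReal.tendsto_toReal (by simp : (0:ℝ≥0∞) ≠ ⊤)).comp hENN
  exact hfin

end SphereAux

/-- For `d ≥ 3`, at a boundary point the cosine of the angle between the
population gradient-direction estimate `g(δ)` and the true gradient `∇S(x_t)` tends
to `1` as `δ → 0⁺`; in particular `g(δ) ≠ 0` for all sufficiently small `δ > 0`. -/
theorem stmt_0 (d : ℕ) (hd : 3 ≤ d) (L : ℝ) (hL : 0 < L)
    (S : EuclideanSpace ℝ (Fin d) → ℝ) (hS : Differentiable ℝ S)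
    (hLip : ∀ x y : EuclideanSpace ℝ (Fin d),
      ‖gradient S x - gradient S y‖ ≤ L * ‖x - y‖)
    (xt : EuclideanSpace ℝ (Fin d)) (hxt : S xt = 0) (hgrad : gradient S xt ≠ 0) :
    Tendsto (fun δ : ℝ =>
        ⟪gEst d S xt δ, gradient S xt⟫ / (‖gEst d S xt δ‖ * ‖gradient S xt‖))
      (nhdsWithin 0 (Set.Ioi 0)) (nhds 1)
    ∧ ∀ᶠ (δ : ℝ) in nhdsWithin 0 (Set.Ioi 0), gEst d S xt δ ≠ 0 := by
  obtain ⟨n, rfl⟩ : ∃ n, d = n + 1 := ⟨d - 1, by omega⟩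
  have hn : 1 ≤ n := by omega
  haveI := SphereAux.isProb n hn
  set v := gradient S xt with hv
  obtain ⟨c, hc, hw⟩ := SphereAux.key_w n hn v hgrad
  set w := ∫ u, sgn ⟪v, u⟫ • u ∂(sphereUniform (n+1)) with hwdef
  have hg : Tendsto (fun δ => gEst (n+1) S xt δ) (nhdsWithin 0 (Set.Ioi 0)) (nhds w) := by
    rw [tendsto_iff_norm_sub_tendsto_zero]
    have hb := (SphereAux.band_tendsto n hn v hgrad L hL).const_mul (2:ℝ)
    rw [mul_zero] at hb
    refine squeeze_zero' ?_ ?_ hb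
    · filter_upwards with δ using norm_nonneg _
    · filter_upwards [self_mem_nhdsWithin] with δ hδ
      exact SphereAux.approx_bound n hn L (le_of_lt hL) S hS hLip xt hxt δ hδ
  have hwne : w ≠ 0 := by
    rw [hw]
    exact smul_ne_zero (ne_of_gt hc) hgrad
  constructor
  · have hnum : Tendsto (fun δ => ⟪gEst (n+1) S xt δ, v⟫)
        (nhdsWithin 0 (Set.Ioi 0)) (nhds ⟪w, v⟫) :=
      hg.inner tendsto_const_nhds
    have hden : Tendsto (fun δ => ‖gEst (n+1) S xt δ‖ * ‖v‖)
        (nhdsWithin 0 (Set.Ioi 0)) (nhds (‖w‖ * ‖v‖)) :=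
      hg.norm.mul tendsto_const_nhds
    have hvne : ‖v‖ ≠ 0 := norm_ne_zero_iff.mpr hgrad
    have hdne : ‖w‖ * ‖v‖ ≠ 0 := mul_ne_zero (norm_ne_zero_iff.mpr hwne) hvne
    have hlim := hnum.div hden hdne
    have hone : ⟪w, v⟫ / (‖w‖ * ‖v‖) = 1 := by
      rw [hw, real_inner_smul_left, real_inner_self_eq_norm_sq, norm_smul,
        Real.norm_eq_abs, abs_of_pos hc]
      field_simp
    rwa [hone] at hlim
  · exact hg.eventually_ne hwne
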